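/- Let ρ : g → so_ε(V,( , )) be a finite-dimensional ε-orthogonal representation of a finite-dimensional ε-quadratic colour Lie algebra, with moment map μ and canonical moment map μ_can(u,v)(w) = ε(v,w)(u,w)v − (v,w)u. Then the following are equivalent: (a) R_μ − (1/3)β(R_μ) = R_{μ_can} (V is special ε-orthogonal); (b) μ(A,B)(C) + ε(B,C)μ(A,C)(B) = (A,B)C + ε(B,C)(A,C)B − 2(B,C)A for all homogeneous A,B,C ∈ V; (c) μ(A,B)(C) + ε(B,C)μ(A,C)(B) = μ_can(A,B)(C) + ε(B,C)μ_can(A,C)(B) for all homogeneous A,B,C ∈ V. -/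
import Mathlib


/-- A commutation factor of an abelian group `Γ` with values in `k`. -/
structure CommutationFactor (k Γ : Type*) [Field k] [AddCommGroup Γ] where
  ε : Γ → Γ → k
  mul_symm : ∀ a b, ε a b * ε b a = 1
  add_fst : ∀ a b c, ε (a + b) c = ε a c * ε b c
  add_snd : ∀ a b c, ε a (b + c) = ε a b * ε a c

section CFhelpers

variable {k Γ : Type*} [Field k] [AddCommGroup Γ]

lemma CommutationFactor.ne_zero (E : CommutationFactor k Γ) (a b : Γ) : E.ε a b ≠ 0 := by
  intro h
  have h1 := E.mul_symm a b
  rw [h, zero_mul] at h1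
  exact zero_ne_one h1

lemma CommutationFactor.zero_snd (E : CommutationFactor k Γ) (a : Γ) : E.ε a 0 = 1 := by
  have h := E.add_snd a 0 0
  rw [add_zero] at h
  exact (mul_left_cancel₀ (E.ne_zero a 0) (by rw [mul_one, ← h])).symm

lemma CommutationFactor.zero_fst (E : CommutationFactor k Γ) (a : Γ) : E.ε 0 a = 1 := by
  have h := E.add_fst 0 0 a
  rw [add_zero] at h
  exact (mul_left_cancel₀ (E.ne_zero 0 a) (by rw [mul_one, ← h])).symm

lemma CommutationFactor.neg_snd (E : CommutationFactor k Γ) (a b : Γ) :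
    E.ε a (-b) = E.ε b a := by
  have h := E.add_snd a b (-b)
  rw [add_neg_cancel, E.zero_snd] at h
  exact mul_left_cancel₀ (E.ne_zero a b) (h.symm.trans (E.mul_symm a b).symm)

lemma CommutationFactor.neg_fst (E : CommutationFactor k Γ) (a b : Γ) :
    E.ε (-a) b = E.ε b a := by
  have h := E.add_fst a (-a) b
  rw [add_neg_cancel, E.zero_fst] at h
  exact mul_left_cancel₀ (E.ne_zero a b) (h.symm.trans (E.mul_symm a b).symm)

lemma CommutationFactor.gg1 (E : CommutationFactor k Γ) (a b c : Γ) :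
    (1 : k) = E.ε a (b + c) * (E.ε c a * E.ε b a) := by
  rw [E.add_snd]
  linear_combination (-1 : k) * E.mul_symm a b
    + (-(E.ε a b * E.ε b a)) * E.mul_symm a c

lemma CommutationFactor.gg2 (E : CommutationFactor k Γ) (a b c : Γ) :
    E.ε (a + b) c * E.ε c a = E.ε b c := by
  rw [E.add_fst]
  linear_combination E.ε b c * E.mul_symm a c

lemma CommutationFactor.gg4 (E : CommutationFactor k Γ) (a b c : Γ) :
    E.ε a (b + c) * (E.ε b (c + a) * E.ε c a) = E.ε b c := by
  rw [E.add_snd, E.add_snd]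
  linear_combination (E.ε b c * E.ε a c * E.ε c a) * E.mul_symm a b
    + E.ε b c * E.mul_symm a c

end CFhelpers

theorem stmt15 {k Γ Mg V : Type*} [Field k] [AddCommGroup Γ] [DecidableEq Γ]
    [AddCommGroup Mg] [Module k Mg] [AddCommGroup V] [Module k V]
    [FiniteDimensional k Mg] [FiniteDimensional k V]
    (h2 : (2 : k) ≠ 0) (h3 : (3 : k) ≠ 0)
    (E : CommutationFactor k Γ)
    (𝒜 : Γ → Submodule k Mg) [DirectSum.Decomposition 𝒜]
    (𝒱 : Γ → Submodule k V) [DirectSum.Decomposition 𝒱]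
    (br : Mg →ₗ[k] Mg →ₗ[k] Mg)
    (hbrdeg : ∀ a b : Γ, ∀ x ∈ 𝒜 a, ∀ y ∈ 𝒜 b, br x y ∈ 𝒜 (a + b))
    (hbrskew : ∀ a b : Γ, ∀ x ∈ 𝒜 a, ∀ y ∈ 𝒜 b, br x y = (-(E.ε a b)) • br y x)
    (hjac : ∀ a b c : Γ, ∀ x ∈ 𝒜 a, ∀ y ∈ 𝒜 b, ∀ z ∈ 𝒜 c,
      E.ε c a • br x (br y z) + E.ε a b • br y (br z x)
        + E.ε b c • br z (br x y) = 0)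
    (Bg : Mg →ₗ[k] Mg →ₗ[k] k)
    (hBgdeg : ∀ a b : Γ, a + b ≠ 0 → ∀ x ∈ 𝒜 a, ∀ y ∈ 𝒜 b, Bg x y = 0)
    (hBgsymm : ∀ a b : Γ, ∀ x ∈ 𝒜 a, ∀ y ∈ 𝒜 b, Bg x y = E.ε a b * Bg y x)
    (hBgad : ∀ a b : Γ, ∀ x ∈ 𝒜 a, ∀ y ∈ 𝒜 b, ∀ z : Mg,
      Bg (br x y) z = -(E.ε a b) * Bg y (br x z))
    (hBgnd : ∀ x : Mg, (∀ y, Bg x y = 0) → x = 0)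
    (Bv : V →ₗ[k] V →ₗ[k] k)
    (hBvdeg : ∀ a b : Γ, a + b ≠ 0 → ∀ v ∈ 𝒱 a, ∀ w ∈ 𝒱 b, Bv v w = 0)
    (hBvsymm : ∀ a b : Γ, ∀ v ∈ 𝒱 a, ∀ w ∈ 𝒱 b, Bv v w = E.ε a b * Bv w v)
    (hBvnd : ∀ v : V, (∀ w, Bv v w = 0) → v = 0)
    (ρ : Mg →ₗ[k] Module.End k V)
    (hρdeg : ∀ a b : Γ, ∀ x ∈ 𝒜 a, ∀ v ∈ 𝒱 b, ρ x v ∈ 𝒱 (a + b))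
    (hρmor : ∀ a b : Γ, ∀ x ∈ 𝒜 a, ∀ y ∈ 𝒜 b,
      ρ (br x y) = ρ x * ρ y - E.ε a b • (ρ y * ρ x))
    (hρskew : ∀ a b : Γ, ∀ x ∈ 𝒜 a, ∀ v ∈ 𝒱 b, ∀ w : V,
      Bv (ρ x v) w + E.ε a b * Bv v (ρ x w) = 0)
    (μ : V →ₗ[k] V →ₗ[k] Mg)
    (hμ : ∀ (x : Mg) (v w : V), Bg x (μ v w) = Bv (ρ x v) w)
    :
    List.TFAE [
      (∀ a b c d : Γ, ∀ A ∈ 𝒱 a, ∀ B ∈ 𝒱 b, ∀ C ∈ 𝒱 c, ∀ D ∈ 𝒱 d,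
        Bv (ρ (μ A B) C) D
          - (3 : k)⁻¹ * (Bv (ρ (μ A B) C) D
              + E.ε a (b + c) * Bv (ρ (μ B C) A) D
              + E.ε (a + b) c * Bv (ρ (μ C A) B) D)
          = E.ε b c * Bv A C * Bv B D - Bv B C * Bv A D),
      (∀ a b c : Γ, ∀ A ∈ 𝒱 a, ∀ B ∈ 𝒱 b, ∀ C ∈ 𝒱 c,
        ρ (μ A B) C + E.ε b c • ρ (μ A C) B
          = Bv A B • C + (E.ε b c * Bv A C) • B - (2 * Bv B C) • A),
      (∀ a b c : Γ, ∀ A ∈ 𝒱 a, ∀ B ∈ 𝒱 b, ∀ C ∈ 𝒱 c,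
        ρ (μ A B) C + E.ε b c • ρ (μ A C) B
          = ((E.ε b c * Bv A C) • B - Bv B C • A)
            + E.ε b c • ((E.ε c b * Bv A B) • C - Bv C B • A))
    ] := by
  -- spanning helpers
  have hallV : ∀ (f : V →ₗ[k] k), (∀ d : Γ, ∀ D ∈ 𝒱 d, f D = 0) → ∀ v, f v = 0 := by
    intro f hf v
    have htop : (⨆ d, 𝒱 d) = ⊤ := (DirectSum.Decomposition.isInternal 𝒱).submodule_iSup_eq_top
    have hle : (⨆ d, 𝒱 d) ≤ LinearMap.ker f :=
      iSup_le fun d x hx => LinearMap.mem_ker.mpr (hf d x hx)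
    exact hle (htop ▸ Submodule.mem_top)
  have hallM : ∀ (f : Mg →ₗ[k] k), (∀ g : Γ, ∀ x ∈ 𝒜 g, f x = 0) → ∀ x, f x = 0 := by
    intro f hf v
    have htop : (⨆ g, 𝒜 g) = ⊤ := (DirectSum.Decomposition.isInternal 𝒜).submodule_iSup_eq_top
    have hle : (⨆ g, 𝒜 g) ≤ LinearMap.ker f :=
      iSup_le fun g x hx => LinearMap.mem_ker.mpr (hf g x hx)
    exact hle (htop ▸ Submodule.mem_top)
  -- nondegeneracy of Bg in the second slot
  have hBgInj : Function.Injective Bg := by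
    rw [← LinearMap.ker_eq_bot, LinearMap.ker_eq_bot']
    intro m hm
    exact hBgnd m fun y => by rw [hm]; rfl
  have hBgSurj : Function.Surjective Bg :=
    (LinearMap.injective_iff_surjective_of_finrank_eq_finrank
      (Subspace.dual_finrank_eq (K := k) (V := Mg)).symm).mp hBgInj
  have hBgnd2 : ∀ m : Mg, (∀ x : Mg, Bg x m = 0) → m = 0 := by
    intro m hm
    refine (Module.forall_dual_apply_eq_zero_iff k m).mp ?_
    intro φ
    obtain ⟨x, rfl⟩ := hBgSurj φ
    exact hm x
  -- skew-symmetry of the moment map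
  have hμskew : ∀ (a b : Γ) (A : V), A ∈ 𝒱 a → ∀ B ∈ 𝒱 b,
      μ B A = (-(E.ε b a)) • μ A B := by
    intro a b A hA B hB
    have key : ∀ x : Mg, Bg x (μ B A + E.ε b a • μ A B) = 0 := by
      intro x
      refine hallM (Bg.flip (μ B A + E.ε b a • μ A B)) ?_ x
      intro g y hy
      have hsym : Bv (ρ y B) A = E.ε (g + b) a * Bv A (ρ y B) :=
        hBvsymm (g + b) a _ (hρdeg g b y hy B hB) A hA
      have hsk : Bv (ρ y A) B + E.ε g a * Bv A (ρ y B) = 0 := hρskew g a y hy A hA B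
      simp only [map_add, map_smul, LinearMap.add_apply, LinearMap.smul_apply,
        LinearMap.flip_apply, smul_eq_mul]
      rw [hμ, hμ, hsym, E.add_fst]
      linear_combination (E.ε b a) * hsk
    have h0 := hBgnd2 _ key
    have h1 : μ B A = -(E.ε b a • μ A B) := eq_neg_of_add_eq_zero_left h0
    rw [h1, neg_smul]
  -- the degree-sensitive scalar facts
  have f1 : ∀ a b c : Γ, ∀ B ∈ 𝒱 b, ∀ C ∈ 𝒱 c,
      E.ε a (b + c) * Bv B C = Bv B C := by
    intro a b c B hB C hC
    by_cases h : b + c = 0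
    · rw [h, E.zero_snd, one_mul]
    · rw [hBvdeg b c h B hB C hC, mul_zero]
  have f2 : ∀ a b c : Γ, ∀ A ∈ 𝒱 a, ∀ B ∈ 𝒱 b,
      E.ε a (b + c) * (E.ε c a * Bv B A) = Bv A B := by
    intro a b c A hA B hB
    rw [E.add_snd, hBvsymm a b A hA B hB]
    linear_combination (E.ε a b * Bv B A) * E.mul_symm a c
  have f3 : ∀ a b c : Γ, ∀ A ∈ 𝒱 a, ∀ C ∈ 𝒱 c,
      E.ε a (b + c) * Bv C A = E.ε b c * Bv A C := by
    intro a b c A hA C hC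
    by_cases h : a + c = 0
    · have hc : c = -a := eq_neg_of_add_eq_zero_right h
      subst hc
      rw [E.add_snd, E.neg_snd a a, E.neg_snd b a,
        hBvsymm (-a) a C hC A hA, E.neg_fst a a]
      linear_combination (E.ε a b * Bv A C) * E.mul_symm a a
        + E.ε a b * Bv A C * E.mul_symm a b - E.ε a b * Bv A C * E.mul_symm a b
    · rw [hBvdeg c a (fun hca => h (by rw [add_comm]; exact hca)) C hC A hA,
        hBvdeg a c h A hA C hC, mul_zero, mul_zero]
  tfae_have 2 ↔ 3 := by
    constructor <;> intro h a b c A hA B hB C hC <;>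
    · have e1 : Bv A B = E.ε b c * (E.ε c b * Bv A B) := by
        linear_combination (-(Bv A B)) * E.mul_symm b c
      have e2 : E.ε b c * Bv C B = Bv B C := (hBvsymm b c B hB C hC).symm
      have hRHS : (Bv A B • C + (E.ε b c * Bv A C) • B - (2 * Bv B C) • A : V)
          = ((E.ε b c * Bv A C) • B - Bv B C • A)
            + E.ε b c • ((E.ε c b * Bv A B) • C - Bv C B • A) := by
        linear_combination (norm := module) e1 • C + e2 • A
      first
      | exact (h a b c A hA B hB C hC).trans hRHS
      | exact (h a b c A hA B hB C hC).trans hRHS.symm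
  tfae_have 1 → 2 := by
    intro h1 a b c A hA B hB C hC
    -- vector form of (1)
    have ha' : ρ (μ A B) C - (3 : k)⁻¹ • (ρ (μ A B) C
          + E.ε a (b + c) • ρ (μ B C) A + E.ε (a + b) c • ρ (μ C A) B)
        = (E.ε b c * Bv A C) • B - Bv B C • A := by
      rw [← sub_eq_zero]
      set X := ρ (μ A B) C - (3 : k)⁻¹ • (ρ (μ A B) C
          + E.ε a (b + c) • ρ (μ B C) A + E.ε (a + b) c • ρ (μ C A) B)
          - ((E.ε b c * Bv A C) • B - Bv B C • A) with hXdef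
      refine hBvnd X (hallV (Bv X) ?_)
      intro d D hD
      have h0 := h1 a b c d A hA B hB C hC D hD
      rw [hXdef]
      simp only [map_sub, map_add, map_smul, LinearMap.sub_apply, LinearMap.add_apply,
        LinearMap.smul_apply, smul_eq_mul]
      linear_combination h0
    have hinv2 : (3 : k) * (3 : k)⁻¹ = 1 := mul_inv_cancel₀ h3
    -- multiplied-by-3 version
    have key1 : (2 : k) • ρ (μ A B) C - E.ε a (b + c) • ρ (μ B C) A
          - E.ε (a + b) c • ρ (μ C A) B
        = (3 * (E.ε b c * Bv A C)) • B - (3 * Bv B C) • A := by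
      linear_combination (norm := module) (3 : k) • ha'
        + hinv2 • (ρ (μ A B) C + E.ε a (b + c) • ρ (μ B C) A + E.ε (a + b) c • ρ (μ C A) B)
    have ha'' : ρ (μ B C) A - (3 : k)⁻¹ • (ρ (μ B C) A
          + E.ε b (c + a) • ρ (μ C A) B + E.ε (b + c) a • ρ (μ A B) C)
        = (E.ε c a * Bv B A) • C - Bv C A • B := by
      rw [← sub_eq_zero]
      set X := ρ (μ B C) A - (3 : k)⁻¹ • (ρ (μ B C) A
          + E.ε b (c + a) • ρ (μ C A) B + E.ε (b + c) a • ρ (μ A B) C)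
          - ((E.ε c a * Bv B A) • C - Bv C A • B) with hXdef
      refine hBvnd X (hallV (Bv X) ?_)
      intro d D hD
      have h0 := h1 b c a d B hB C hC A hA D hD
      rw [hXdef]
      simp only [map_sub, map_add, map_smul, LinearMap.sub_apply, LinearMap.add_apply,
        LinearMap.smul_apply, smul_eq_mul]
      linear_combination h0
    have key2 : (2 : k) • ρ (μ B C) A - E.ε b (c + a) • ρ (μ C A) B
          - E.ε (b + c) a • ρ (μ A B) C
        = (3 * (E.ε c a * Bv B A)) • C - (3 * Bv C A) • B := by
      linear_combination (norm := module) (3 : k) • ha''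
        + hinv2 • (ρ (μ B C) A + E.ε b (c + a) • ρ (μ C A) B + E.ε (b + c) a • ρ (μ A B) C)
    -- skew relation
    have k2 : ρ (μ C A) B = (-(E.ε c a)) • ρ (μ A C) B := by
      rw [hμskew a c A hA C hC, map_smul, LinearMap.smul_apply]
    have gg3 : E.ε a (b + c) * E.ε (b + c) a = 1 := E.mul_symm a (b + c)
    have h3s : (3 : k) • (ρ (μ A B) C + E.ε b c • ρ (μ A C) B)
        = (3 : k) • (Bv A B • C + (E.ε b c * Bv A C) • B - (2 * Bv B C) • A) := by
      linear_combination (norm := module) (2 : k) • key1 + E.ε a (b + c) • key2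
        + (2 * E.ε (a + b) c + E.ε a (b + c) * E.ε b (c + a)) • k2
        + gg3 • (ρ (μ A B) C)
        + (E.gg2 a b c) • ((-2 : k) • ρ (μ A C) B)
        + (E.gg4 a b c) • ((-1 : k) • ρ (μ A C) B)
        + (f2 a b c A hA B hB) • ((3 : k) • C)
        + (f3 a b c A hA C hC) • ((-3 : k) • B)
    exact smul_right_injective V h3 h3s
  tfae_have 2 → 1 := by
    intro hb a b c d A hA B hB C hC D hD
    have hb1 := hb a b c A hA B hB C hC
    have hb2 := hb b c a B hB C hC A hA
    have k1 : ρ (μ B A) C = (-(E.ε b a)) • ρ (μ A B) C := by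
      rw [hμskew a b A hA B hB, map_smul, LinearMap.smul_apply]
    have k2 : ρ (μ C A) B = (-(E.ε c a)) • ρ (μ A C) B := by
      rw [hμskew a c A hA C hC, map_smul, LinearMap.smul_apply]
    have hG3 : (3 : k) • ρ (μ A B) C - (ρ (μ A B) C
          + E.ε a (b + c) • ρ (μ B C) A + E.ε (a + b) c • ρ (μ C A) B)
        = (3 : k) • ((E.ε b c * Bv A C) • B - Bv B C • A) := by
      linear_combination (norm := module) hb1 - E.ε a (b + c) • hb2
        + (E.ε a (b + c) * E.ε c a) • k1 - E.ε (a + b) c • k2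
        + (E.gg1 a b c) • (ρ (μ A B) C)
        + (E.gg2 a b c) • (ρ (μ A C) B)
        + (f3 a b c A hA C hC) • ((2 : k) • B)
        + (f1 a b c B hB C hC) • ((-1 : k) • A)
        + (f2 a b c A hA B hB) • ((-1 : k) • C)
    have hinv1 : (1 : k) = (3 : k)⁻¹ * 3 := (inv_mul_cancel₀ h3).symm
    have hG : ρ (μ A B) C - (3 : k)⁻¹ • (ρ (μ A B) C
          + E.ε a (b + c) • ρ (μ B C) A + E.ε (a + b) c • ρ (μ C A) B)
        = (E.ε b c * Bv A C) • B - Bv B C • A := by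
      linear_combination (norm := module) (3 : k)⁻¹ • hG3
        + hinv1 • (ρ (μ A B) C - ((E.ε b c * Bv A C) • B - Bv B C • A))
    have := congrArg (fun v => Bv v D) hG
    simp only [map_sub, map_add, map_smul, LinearMap.sub_apply, LinearMap.add_apply,
      LinearMap.smul_apply, smul_eq_mul] at this
    linear_combination this
  tfae_finish
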